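/- Let θ_1, θ_2 > 0 and a > 0. If D_1 and D_2 are independent nonnegative random variables such that D_1 satisfies the Dickman fixed-point equation with parameters (θ_1, a) and D_2 satisfies the Dickman fixed-point equation with parameters (θ_2, a), then their sum D_1 + D_2 satisfies the Dickman fixed-point equation with parameters (θ_1 + θ_2, a). -/

import Mathlib

open MeasureTheory ProbabilityTheory

/-- The uniform probability measure on the interval `(c, d]`. -/
noncomputable def unifIoc (c d : ℝ) : Measure ℝ :=
  (ENNReal.ofReal (d - c))⁻¹ • volume.restrict (Set.Ioc c d)

/-- `D` satisfies the Dickman fixed-point equation with parameters `(θ, a)`: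
`D =_d U^{1/θ} (a + D)` with `U` uniform on `(0,1]` independent of `D`. -/
def DickmanFP {Ω : Type*} [MeasurableSpace Ω] (P : Measure Ω) (θ a : ℝ) (D : Ω → ℝ) : Prop :=
  P.map D = (P.prod (unifIoc 0 1)).map fun p : Ω × ℝ => p.2 ^ (1 / θ) * (a + D p.1)

open Set Filter Topology intervalIntegral BoundedContinuousFunction
open scoped ENNReal NNReal

namespace DickmanProof

lemma integrable_exp_neg {μ : Measure ℝ} [IsFiniteMeasure μ]
    (hμ : μ {x | x < 0} = 0) {s : ℝ} (hs : 0 ≤ s) :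
    Integrable (fun x => Real.exp (-(s * x))) μ := by
  refine Integrable.mono' (integrable_const 1) ?_ ?_
  · exact (Real.continuous_exp.comp (continuous_const.mul continuous_id).neg).aestronglyMeasurable
  · have h : ∀ᵐ x ∂μ, 0 ≤ x := by
      rw [ae_iff]; simpa [not_le] using hμ
    filter_upwards [h] with x hx
    rw [Real.norm_eq_abs, abs_of_pos (Real.exp_pos _)]
    refine Real.exp_le_one_iff.mpr (by nlinarith)

lemma tail_small (μ : Measure ℝ) [IsProbabilityMeasure μ] {ε : ℝ} (hε : 0 < ε) :
    ∀ᶠ n : ℕ in atTop, (μ (Set.Ioi (n : ℝ))).toReal ≤ ε := by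
  have h : Tendsto (fun n : ℕ => μ (Set.Ioi (n : ℝ))) atTop (𝓝 (μ (⋂ n : ℕ, Set.Ioi (n : ℝ)))) := by
    refine tendsto_measure_iInter_atTop (fun i => measurableSet_Ioi.nullMeasurableSet)
      (fun i j hij => ?_) ⟨0, measure_ne_top μ _⟩
    exact Set.Ioi_subset_Ioi (by exact_mod_cast hij)
  have hempty : (⋂ n : ℕ, Set.Ioi (n : ℝ)) = ∅ := by
    ext x
    simp only [Set.mem_iInter, Set.mem_Ioi, Set.mem_empty_iff_false, iff_false, not_forall, not_lt]
    obtain ⟨n, hn⟩ := exists_nat_gt x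
    exact ⟨n, hn.le⟩
  rw [hempty, measure_empty] at h
  have := h.eventually_le_const (by simpa using ENNReal.ofReal_pos.mpr hε :
    (0 : ℝ≥0∞) < ENNReal.ofReal ε)
  filter_upwards [this] with n hn
  exact ENNReal.toReal_le_of_le_ofReal hε.le hn

lemma integral_eq_of_laplace (μ ν : Measure ℝ) [IsProbabilityMeasure μ] [IsProbabilityMeasure ν]
    (hμ : μ {x | x < 0} = 0) (hν : ν {x | x < 0} = 0)
    (h : ∀ n : ℕ, ∫ x, Real.exp (-((n : ℝ) * x)) ∂μ = ∫ x, Real.exp (-((n : ℝ) * x)) ∂ν)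
    (g : ℝ → ℝ) (hg : Continuous g) (K : ℝ) (hK : ∀ x, |g x| ≤ K) :
    ∫ x, g x ∂μ = ∫ x, g x ∂ν := by
  have hK0 : 0 ≤ K := le_trans (abs_nonneg _) (hK 0)
  have haeμ : ∀ᵐ x ∂μ, 0 ≤ x := by rw [ae_iff]; simpa [not_le] using hμ
  have haeν : ∀ᵐ x ∂ν, 0 ≤ x := by rw [ae_iff]; simpa [not_le] using hν
  have hgint : ∀ (ρ : Measure ℝ) [IsProbabilityMeasure ρ], Integrable g ρ := by
    intro ρ _
    exact Integrable.mono' (integrable_const K) hg.aestronglyMeasurable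
      (Eventually.of_forall fun x => by simpa using hK x)
  have key : ∀ ε : ℝ, 0 < ε → ε ≤ 1 → |∫ x, g x ∂μ - ∫ x, g x ∂ν| ≤ (4 * K + 6) * ε := by
    intro ε hε hε1
    obtain ⟨M, hMμ, hMν⟩ : ∃ M : ℕ, (μ (Set.Ioi (M : ℝ))).toReal ≤ ε ∧
        (ν (Set.Ioi (M : ℝ))).toReal ≤ ε := ((tail_small μ hε).and (tail_small ν hε)).exists
    set c : ℝ := Real.exp (-(M : ℝ)) with hc
    have hc0 : 0 < c := Real.exp_pos _
    set T : ℝ → ℝ := fun y => g (-Real.log (max y c)) with hT_def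
    have hT : Continuous T := by
      refine hg.comp (Continuous.neg ?_)
      refine continuous_iff_continuousAt.mpr fun y => ?_
      have hin : ContinuousAt (fun y : ℝ => max y c) y :=
        (continuous_id.max continuous_const).continuousAt
      exact ContinuousAt.comp (g := Real.log) (f := fun y : ℝ => max y c)
        (Real.continuousAt_log (by positivity : max y c ≠ 0)) hin
    have hTK : ∀ y, |T y| ≤ K := fun y => hK _
    have hTg : ∀ x : ℝ, 0 ≤ x → x ≤ (M : ℝ) → T (Real.exp (-x)) = g x := by
      intro x hx0 hxM
      have hmax : max (Real.exp (-x)) c = Real.exp (-x) :=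
        max_eq_left (Real.exp_le_exp.mpr (by linarith))
      simp only [hT_def, hmax, Real.log_exp, neg_neg]
    obtain ⟨p, hp⟩ := exists_polynomial_near_of_continuousOn 0 1 T hT.continuousOn ε hε
    set q : ℝ → ℝ := fun x => p.eval (Real.exp (-x)) with hq_def
    have hqcont : Continuous q := p.continuous_aeval.comp (Real.continuous_exp.comp continuous_neg)
    have hmem : ∀ x : ℝ, 0 ≤ x → Real.exp (-x) ∈ Set.Icc (0:ℝ) 1 :=
      fun x hx => ⟨(Real.exp_pos _).le, Real.exp_le_one_iff.mpr (by linarith)⟩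
    have hqK : ∀ x : ℝ, 0 ≤ x → |q x| ≤ K + ε := by
      intro x hx
      have h1 := hp _ (hmem x hx)
      have h2 := hTK (Real.exp (-x))
      calc |q x| = |(p.eval (Real.exp (-x)) - T (Real.exp (-x))) + T (Real.exp (-x))| := by
            simp only [hq_def, sub_add_cancel]
        _ ≤ |p.eval (Real.exp (-x)) - T (Real.exp (-x))| + |T (Real.exp (-x))| := abs_add_le _ _
        _ ≤ ε + K := by linarith [h1.le]
        _ = K + ε := by ring
    have hqint : ∀ (ρ : Measure ℝ) [IsProbabilityMeasure ρ], ρ {x | x < 0} = 0 →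
        Integrable q ρ := by
      intro ρ _ hρ
      have hae : ∀ᵐ x ∂ρ, 0 ≤ x := by rw [ae_iff]; simpa [not_le] using hρ
      refine Integrable.mono' (integrable_const (K + ε)) hqcont.aestronglyMeasurable ?_
      filter_upwards [hae] with x hx
      simpa using hqK x hx
    -- ∫ q dμ = ∫ q dν
    have hqsum : ∀ x : ℝ, q x = ∑ i ∈ Finset.range (p.natDegree + 1),
        p.coeff i * Real.exp (-((i : ℝ) * x)) := by
      intro x
      show Polynomial.eval (Real.exp (-x)) p = _
      rw [Polynomial.eval_eq_sum_range]
      refine Finset.sum_congr rfl fun i _ => ?_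
      rw [← Real.exp_nat_mul]
      ring_nf
    have hqeq : ∫ x, q x ∂μ = ∫ x, q x ∂ν := by
      simp_rw [hqsum]
      rw [integral_finset_sum _ (fun i _ => (integrable_exp_neg hμ i.cast_nonneg).const_mul _),
        integral_finset_sum _ (fun i _ => (integrable_exp_neg hν i.cast_nonneg).const_mul _)]
      refine Finset.sum_congr rfl fun i _ => ?_
      rw [MeasureTheory.integral_const_mul, MeasureTheory.integral_const_mul, h i]
    -- pointwise bound a.e.
    have hbound : ∀ (ρ : Measure ℝ) [IsProbabilityMeasure ρ], ρ {x | x < 0} = 0 →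
        (ρ (Set.Ioi (M : ℝ))).toReal ≤ ε →
        |∫ x, g x ∂ρ - ∫ x, q x ∂ρ| ≤ ε + (2 * K + 2) * ε := by
      intro ρ _ hρ hρM
      have hae : ∀ᵐ x ∂ρ, 0 ≤ x := by rw [ae_iff]; simpa [not_le] using hρ
      have hint_g := hgint ρ
      have hint_q := hqint ρ hρ
      rw [← integral_sub hint_g hint_q]
      have hb : ∀ᵐ x ∂ρ, ‖g x - q x‖ ≤
          ε + (Set.Ioi (M : ℝ)).indicator (fun _ => 2 * K + 2) x := by
        filter_upwards [hae] with x hx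
        rw [Real.norm_eq_abs]
        by_cases hxM : x ≤ (M : ℝ)
        · have h1 := hp _ (hmem x hx)
          rw [hTg x hx hxM] at h1
          have : (Set.Ioi (M : ℝ)).indicator (fun _ => 2 * K + 2) x = 0 :=
            Set.indicator_of_notMem (by simpa using hxM) _
          rw [this, add_zero, abs_sub_comm]
          exact h1.le
        · have : (Set.Ioi (M : ℝ)).indicator (fun _ => 2 * K + 2) x = 2 * K + 2 :=
            Set.indicator_of_mem (by simpa using lt_of_not_ge hxM) _
          rw [this]
          have := hqK x hx
          have := hK x
          have := abs_sub (g x) (q x)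
          calc |g x - q x| ≤ |g x| + |q x| := abs_sub _ _
            _ ≤ K + (K + ε) := by linarith
            _ ≤ ε + (2 * K + 2) := by linarith
      calc |∫ x, g x - q x ∂ρ| ≤ ∫ x, ε + (Set.Ioi (M : ℝ)).indicator (fun _ => 2 * K + 2) x ∂ρ := by
            refine (norm_integral_le_of_norm_le ?_ hb)
            exact (integrable_const ε).add ((integrable_const _).indicator measurableSet_Ioi)
        _ = ε + (2 * K + 2) * (ρ (Set.Ioi (M : ℝ))).toReal := by
            rw [integral_add (integrable_const ε)
              ((integrable_const _).indicator measurableSet_Ioi)]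
            rw [MeasureTheory.integral_const, MeasureTheory.integral_indicator measurableSet_Ioi, MeasureTheory.setIntegral_const]
            simp [measure_univ, mul_comm, Measure.real]
        _ ≤ ε + (2 * K + 2) * ε := by
            have h2 : (0:ℝ) ≤ 2 * K + 2 := by linarith
            nlinarith
    have hμb := hbound μ hμ hMμ
    have hνb := hbound ν hν hMν
    calc |∫ x, g x ∂μ - ∫ x, g x ∂ν|
        = |(∫ x, g x ∂μ - ∫ x, q x ∂μ) + (∫ x, q x ∂μ - ∫ x, q x ∂ν)
            + (∫ x, q x ∂ν - ∫ x, g x ∂ν)| := by ring_nf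
      _ ≤ (ε + (2*K+2)*ε) + 0 + (ε + (2*K+2)*ε) := by
          have h3 : |∫ x, q x ∂ν - ∫ x, g x ∂ν| ≤ ε + (2*K+2)*ε := by
            rw [abs_sub_comm]; exact hνb
          have h2 : |∫ x, q x ∂μ - ∫ x, q x ∂ν| = 0 := by rw [hqeq]; simp
          calc |(∫ x, g x ∂μ - ∫ x, q x ∂μ) + (∫ x, q x ∂μ - ∫ x, q x ∂ν)
            + (∫ x, q x ∂ν - ∫ x, g x ∂ν)|
              ≤ |∫ x, g x ∂μ - ∫ x, q x ∂μ| + |∫ x, q x ∂μ - ∫ x, q x ∂ν|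
                + |∫ x, q x ∂ν - ∫ x, g x ∂ν| := abs_add_three _ _ _
            _ ≤ (ε + (2*K+2)*ε) + 0 + (ε + (2*K+2)*ε) := by
                rw [h2]; exact add_le_add (add_le_add hμb le_rfl) h3
      _ ≤ (4 * K + 6) * ε := by nlinarith
  -- conclude
  by_contra hne
  have hd : 0 < |∫ x, g x ∂μ - ∫ x, g x ∂ν| := by
    rw [abs_pos, sub_ne_zero]; exact hne
  set d := |∫ x, g x ∂μ - ∫ x, g x ∂ν| with hd_def
  have hden : (0:ℝ) < 4 * K + 6 := by linarith
  set ε := min 1 (d / (2 * (4 * K + 6))) with hε_def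
  have hε : 0 < ε := lt_min one_pos (by positivity)
  have := key ε hε (min_le_left _ _)
  have h2 : (4 * K + 6) * ε ≤ (4 * K + 6) * (d / (2 * (4 * K + 6))) :=
    mul_le_mul_of_nonneg_left (min_le_right _ _) hden.le
  have h3 : (4 * K + 6) * (d / (2 * (4 * K + 6))) = d / 2 := by
    field_simp
  rw [h3] at h2
  have : d ≤ d / 2 := le_trans this h2
  linarith

lemma ext_of_laplace (μ ν : Measure ℝ) [IsProbabilityMeasure μ] [IsProbabilityMeasure ν]
    (hμ : μ {x | x < 0} = 0) (hν : ν {x | x < 0} = 0)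
    (h : ∀ n : ℕ, ∫ x, Real.exp (-((n : ℝ) * x)) ∂μ = ∫ x, Real.exp (-((n : ℝ) * x)) ∂ν) :
    μ = ν := by
  refine ext_of_forall_lintegral_eq_of_IsFiniteMeasure ?_
  intro f
  set g : ℝ → ℝ := fun x => (f x : ℝ) with hg_def
  have hgc : Continuous g := NNReal.continuous_coe.comp f.continuous
  obtain ⟨C, hC⟩ := f.bounded
  set K : ℝ := (f 0 : ℝ) + C with hK_def
  have hgK : ∀ x, |g x| ≤ K := by
    intro x
    rw [abs_of_nonneg (f x).coe_nonneg]
    have := hC x 0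
    rw [NNReal.dist_eq] at this
    have h2 := abs_le.mp this
    simp only [hg_def, hK_def]
    linarith [h2.2]
  have hint : ∀ (ρ : Measure ℝ) [IsProbabilityMeasure ρ], Integrable g ρ := by
    intro ρ _
    exact Integrable.mono' (integrable_const K) hgc.aestronglyMeasurable
      (Eventually.of_forall fun x => by simpa using hgK x)
  rw [lintegral_coe_eq_integral f (hint μ), lintegral_coe_eq_integral f (hint ν)]
  congr 1
  exact integral_eq_of_laplace μ ν hμ hν h g hgc K hgK

lemma unifIoc_eq : unifIoc 0 1 = volume.restrict (Set.Ioc 0 1) := by simp [unifIoc]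

instance : IsProbabilityMeasure (unifIoc 0 1) := by
  rw [unifIoc_eq]; constructor; simp

lemma subst_rpow {θ : ℝ} (hθ : 0 < θ) (g : ℝ → ℝ) :
    ∫ u in Set.Ioc (0:ℝ) 1, g (u ^ (1/θ)) = ∫ v in Set.Ioc (0:ℝ) 1, θ * v ^ (θ - 1) * g v := by
  have himg : (fun v : ℝ => v ^ θ) '' Set.Ioc 0 1 = Set.Ioc 0 1 := by
    ext y
    constructor
    · rintro ⟨v, ⟨hv0, hv1⟩, rfl⟩
      exact ⟨Real.rpow_pos_of_pos hv0 θ, Real.rpow_le_one hv0.le hv1 hθ.le⟩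
    · rintro ⟨hy0, hy1⟩
      refine ⟨y ^ (1/θ), ⟨Real.rpow_pos_of_pos hy0 _,
        Real.rpow_le_one hy0.le hy1 (by positivity)⟩, ?_⟩
      show (y ^ (1/θ)) ^ θ = y
      rw [← Real.rpow_mul hy0.le, one_div, inv_mul_cancel₀ hθ.ne', Real.rpow_one]
  have hderiv : ∀ v ∈ Set.Ioc (0:ℝ) 1, HasDerivWithinAt (fun v : ℝ => v ^ θ)
      (θ * v ^ (θ - 1)) (Set.Ioc 0 1) v := fun v hv =>
    (Real.hasDerivAt_rpow_const (Or.inl hv.1.ne')).hasDerivWithinAt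
  have hinj : Set.InjOn (fun v : ℝ => v ^ θ) (Set.Ioc 0 1) :=
    fun x hx y hy hxy => Real.rpow_left_injOn hθ.ne' hx.1.le hy.1.le hxy
  have key := integral_image_eq_integral_abs_deriv_smul measurableSet_Ioc hderiv hinj
    (fun u => g (u ^ (1/θ)))
  rw [himg] at key
  rw [key]
  refine setIntegral_congr_fun measurableSet_Ioc fun v hv => ?_
  have h1 : (v ^ θ) ^ (1/θ) = v := by
    rw [← Real.rpow_mul hv.1.le, one_div, mul_inv_cancel₀ hθ.ne', Real.rpow_one]
  have h2 : |θ * v ^ (θ - 1)| = θ * v ^ (θ - 1) :=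
    abs_of_nonneg (mul_nonneg hθ.le (Real.rpow_nonneg hv.1.le _))
  show |θ * v ^ (θ - 1)| • g ((v ^ θ) ^ (1/θ)) = θ * v ^ (θ - 1) * g v
  rw [h1, h2, smul_eq_mul]

lemma subst_mul {s : ℝ} (hs : 0 < s) (k : ℝ → ℝ) :
    ∫ t in Set.Ioc (0:ℝ) s, k t = ∫ v in Set.Ioc (0:ℝ) 1, s * k (s * v) := by
  have himg : (fun v : ℝ => s * v) '' Set.Ioc 0 1 = Set.Ioc 0 s := by
    ext y
    constructor
    · rintro ⟨v, ⟨hv0, hv1⟩, rfl⟩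
      constructor
      · positivity
      · calc s * v ≤ s * 1 := by nlinarith
          _ = s := mul_one s
    · rintro ⟨hy0, hy1⟩
      exact ⟨y / s, ⟨by positivity, by rw [div_le_one hs]; exact hy1⟩, by field_simp⟩
  have hderiv : ∀ v ∈ Set.Ioc (0:ℝ) 1, HasDerivWithinAt (fun v : ℝ => s * v)
      s (Set.Ioc 0 1) v := fun v hv => by
    simpa using ((hasDerivAt_id v).const_mul s).hasDerivWithinAt
  have hinj : Set.InjOn (fun v : ℝ => s * v) (Set.Ioc 0 1) :=
    fun x _ y _ hxy => by
      have : s * x = s * y := hxy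
      exact mul_left_cancel₀ hs.ne' this
  have key := integral_image_eq_integral_abs_deriv_smul measurableSet_Ioc
    (f' := fun _ => s) hderiv hinj k
  rw [himg] at key
  rw [key]
  refine setIntegral_congr_fun measurableSet_Ioc fun v hv => ?_
  show |s| • k (s * v) = s * k (s * v)
  rw [abs_of_pos hs, smul_eq_mul]

/-- Laplace transform of the right-hand side of the Dickman fixed-point equation. -/
lemma laplace_map {Ω : Type*} [MeasurableSpace Ω] (P : Measure Ω) [IsProbabilityMeasure P] {θ a : ℝ} (hθ : 0 < θ) (ha : 0 < a)
    {D : Ω → ℝ} (hD : Measurable D) (hDnn : ∀ ω, 0 ≤ D ω) {s : ℝ} (hs : 0 < s) :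
    ∫ x, Real.exp (-(s * x))
        ∂((P.prod (unifIoc 0 1)).map fun p : Ω × ℝ => p.2 ^ (1/θ) * (a + D p.1))
      = θ * s ^ (-θ) * ∫ t in Set.Ioc (0:ℝ) s,
          t ^ (θ - 1) * (Real.exp (-(t * a)) * ∫ ω, Real.exp (-(t * D ω)) ∂P) := by
  set m := unifIoc 0 1 with hm
  set F : Ω × ℝ → ℝ := fun p => p.2 ^ (1/θ) * (a + D p.1) with hF_def
  have hF : Measurable F :=
    (measurable_snd.pow_const _).mul (measurable_const.add (hD.comp measurable_fst))
  have hae2 : ∀ᵐ p : Ω × ℝ ∂(P.prod m), p.2 ∈ Set.Ioc (0:ℝ) 1 := by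
    rw [ae_iff]
    have hset : {p : Ω × ℝ | ¬ p.2 ∈ Set.Ioc (0:ℝ) 1} = Set.univ ×ˢ (Set.Ioc (0:ℝ) 1)ᶜ := by
      ext p; simp
    rw [hset, Measure.prod_prod, hm, unifIoc_eq,
      Measure.restrict_apply measurableSet_Ioc.compl]
    simp
  -- step 1 : integral over the map
  rw [integral_map hF.aemeasurable
    (Continuous.aestronglyMeasurable (by continuity : Continuous fun x : ℝ => Real.exp (-(s*x))))]
  -- step 2 : Fubini
  have hint : Integrable (fun p : Ω × ℝ => Real.exp (-(s * F p))) (P.prod m) := by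
    refine Integrable.mono' (integrable_const 1)
      (((measurable_const.mul hF).neg.exp).aestronglyMeasurable) ?_
    filter_upwards [hae2] with p hp
    rw [Real.norm_eq_abs, abs_of_pos (Real.exp_pos _)]
    refine Real.exp_le_one_iff.mpr ?_
    have h1 : (0:ℝ) ≤ p.2 ^ (1/θ) := Real.rpow_nonneg hp.1.le _
    have h2 : (0:ℝ) ≤ a + D p.1 := by linarith [hDnn p.1, ha.le]
    have : (0:ℝ) ≤ F p := mul_nonneg h1 h2
    nlinarith
  rw [MeasureTheory.integral_prod_symm _ hint]
  -- now an integral over m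
  rw [hm, unifIoc_eq]
  -- step 3: substitution u = v^θ
  have step3 := subst_rpow hθ (fun c => ∫ ω, Real.exp (-(s * (c * (a + D ω)))) ∂P)
  calc (∫ u in Set.Ioc (0:ℝ) 1, ∫ ω, Real.exp (-(s * F (ω, u))) ∂P)
      = ∫ u in Set.Ioc (0:ℝ) 1,
          (fun c => ∫ ω, Real.exp (-(s * (c * (a + D ω)))) ∂P) (u ^ (1/θ)) := by
        refine setIntegral_congr_fun measurableSet_Ioc fun u hu => ?_
        simp only [hF_def]
    _ = ∫ v in Set.Ioc (0:ℝ) 1, θ * v ^ (θ - 1) *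
          ∫ ω, Real.exp (-(s * (v * (a + D ω)))) ∂P := step3
    _ = θ * s ^ (-θ) * ∫ t in Set.Ioc (0:ℝ) s,
          t ^ (θ - 1) * (Real.exp (-(t * a)) * ∫ ω, Real.exp (-(t * D ω)) ∂P) := by
        rw [subst_mul hs (fun t => t ^ (θ - 1) *
          (Real.exp (-(t * a)) * ∫ ω, Real.exp (-(t * D ω)) ∂P))]
        rw [← MeasureTheory.integral_const_mul]
        refine (setIntegral_congr_fun measurableSet_Ioc fun v hv => ?_).symm
        have hv0 : 0 < v := hv.1
        have hsv : (s * v) ^ (θ - 1) = s ^ (θ - 1) * v ^ (θ - 1) :=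
          Real.mul_rpow hs.le hv0.le
        have hss : θ * s ^ (-θ) * (s * (s ^ (θ - 1) * v ^ (θ - 1))) = θ * v ^ (θ - 1) := by
          have e1 : s * s ^ (θ - 1) = s ^ θ := by
            nth_rewrite 1 [← Real.rpow_one s]
            rw [← Real.rpow_add hs]; norm_num
          have e2 : s ^ (-θ) * s ^ θ = 1 := by
            rw [← Real.rpow_add hs]; simp
          calc θ * s ^ (-θ) * (s * (s ^ (θ - 1) * v ^ (θ - 1)))
              = θ * (s ^ (-θ) * (s * s ^ (θ - 1))) * v ^ (θ - 1) := by ring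
            _ = θ * (s ^ (-θ) * s ^ θ) * v ^ (θ - 1) := by rw [e1]
            _ = θ * v ^ (θ - 1) := by rw [e2]; ring
        have hexp : Real.exp (-(s * v * a)) * (∫ ω, Real.exp (-(s * v * D ω)) ∂P)
            = ∫ ω, Real.exp (-(s * (v * (a + D ω)))) ∂P := by
          rw [← MeasureTheory.integral_const_mul]
          congr 1
          ext ω
          rw [← Real.exp_add]
          congr 1
          ring
        calc θ * s ^ (-θ) * (s * ((s * v) ^ (θ - 1) *
              (Real.exp (-(s * v * a)) * ∫ ω, Real.exp (-(s * v * D ω)) ∂P)))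
            = θ * s ^ (-θ) * (s * (s ^ (θ - 1) * v ^ (θ - 1))) *
              (Real.exp (-(s * v * a)) * ∫ ω, Real.exp (-(s * v * D ω)) ∂P) := by
              rw [hsv]; ring
          _ = θ * v ^ (θ - 1) * ∫ ω, Real.exp (-(s * (v * (a + D ω)))) ∂P := by
              rw [hss, hexp]

lemma core {θ₁ θ₂ a : ℝ} (hθ₁ : 0 < θ₁) (hθ₂ : 0 < θ₂) (ha : 0 < a)
    (φ₁ φ₂ : ℝ → ℝ)
    (hb₁ : ∀ t, 0 ≤ t → |φ₁ t| ≤ 1) (hb₂ : ∀ t, 0 ≤ t → |φ₂ t| ≤ 1)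
    (hc₁ : ∀ t, 0 < t → ContinuousAt φ₁ t) (hc₂ : ∀ t, 0 < t → ContinuousAt φ₂ t)
    (he₁ : ∀ s, 0 < s → s ^ θ₁ * φ₁ s
      = θ₁ * ∫ t in (0:ℝ)..s, t ^ (θ₁ - 1) * (Real.exp (-(t * a)) * φ₁ t))
    (he₂ : ∀ s, 0 < s → s ^ θ₂ * φ₂ s
      = θ₂ * ∫ t in (0:ℝ)..s, t ^ (θ₂ - 1) * (Real.exp (-(t * a)) * φ₂ t)) :
    ∀ s, 0 < s → s ^ (θ₁ + θ₂) * (φ₁ s * φ₂ s)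
      = (θ₁ + θ₂) * ∫ t in (0:ℝ)..s, t ^ (θ₁ + θ₂ - 1) *
          (Real.exp (-(t * a)) * (φ₁ t * φ₂ t)) := by
  have habs : ∀ (φ : ℝ → ℝ), (∀ t, 0 ≤ t → |φ t| ≤ 1) →
      ∀ θ : ℝ, 0 < θ → ∀ t : ℝ, 0 < t →
      ‖t ^ (θ - 1) * (Real.exp (-(t * a)) * φ t)‖ ≤ t ^ (θ - 1) := by
    intro φ hb θ hθ t ht
    have h1 : Real.exp (-(t * a)) ≤ 1 :=
      Real.exp_le_one_iff.mpr (by nlinarith [ht.le, ha.le])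
    have h2 := hb t ht.le
    have h3 : (0:ℝ) ≤ t ^ (θ - 1) := Real.rpow_nonneg ht.le _
    rw [Real.norm_eq_abs, abs_mul, abs_mul, abs_of_nonneg h3, abs_of_pos (Real.exp_pos _)]
    have h4 : Real.exp (-(t * a)) * |φ t| ≤ 1 := by
      nlinarith [mul_nonneg (sub_nonneg.mpr h1) (abs_nonneg (φ t)), (Real.exp_pos (-(t * a))).le]
    exact mul_le_of_le_one_right h3 h4
  have hContOn : ∀ (φ : ℝ → ℝ), (∀ t, 0 < t → ContinuousAt φ t) → ∀ θ : ℝ,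
      ∀ t : ℝ, 0 < t →
      ContinuousAt (fun t => t ^ (θ - 1) * (Real.exp (-(t * a)) * φ t)) t := by
    intro φ hc θ t ht
    refine ContinuousAt.mul ?_ (ContinuousAt.mul ?_ (hc t ht))
    · exact Real.continuousAt_rpow_const t _ (Or.inl ht.ne')
    · exact Real.continuous_exp.continuousAt.comp
        ((continuous_id.mul continuous_const).continuousAt).neg
  have hInt : ∀ (φ : ℝ → ℝ), (∀ t, 0 ≤ t → |φ t| ≤ 1) → (∀ t, 0 < t → ContinuousAt φ t) →
      ∀ θ : ℝ, 0 < θ → ∀ s : ℝ, 0 < s →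
      IntervalIntegrable (fun t => t ^ (θ - 1) * (Real.exp (-(t * a)) * φ t)) volume 0 s := by
    intro φ hb hc θ hθ s hs
    rw [intervalIntegrable_iff, uIoc_of_le hs.le]
    have hmeas : AEStronglyMeasurable (fun t => t ^ (θ - 1) * (Real.exp (-(t * a)) * φ t))
        (volume.restrict (Set.Ioc 0 s)) := by
      refine ContinuousOn.aestronglyMeasurable ?_ measurableSet_Ioc
      intro t ht
      exact (hContOn φ hc θ t ht.1).continuousWithinAt
    have hbi : IntegrableOn (fun t : ℝ => t ^ (θ - 1)) (Set.Ioc 0 s) volume := by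
      have := (intervalIntegrable_rpow' (by linarith : (-1:ℝ) < θ - 1) (a := 0) (b := s))
      rw [intervalIntegrable_iff, uIoc_of_le hs.le] at this
      exact this
    refine Integrable.mono' hbi hmeas ?_
    filter_upwards [ae_restrict_mem measurableSet_Ioc] with t ht
    exact habs φ hb θ hθ t ht.1
  have hFTC : ∀ (φ : ℝ → ℝ), (∀ t, 0 ≤ t → |φ t| ≤ 1) → (∀ t, 0 < t → ContinuousAt φ t) →
      ∀ θ : ℝ, 0 < θ → ∀ s : ℝ, 0 < s →
      HasDerivAt (fun u => ∫ t in (0:ℝ)..u, t ^ (θ - 1) * (Real.exp (-(t * a)) * φ t))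
        (s ^ (θ - 1) * (Real.exp (-(s * a)) * φ s)) s := by
    intro φ hb hc θ hθ s hs
    refine integral_hasDerivAt_right (hInt φ hb hc θ hθ s hs) ?_ (hContOn φ hc θ s hs)
    exact ContinuousAt.stronglyMeasurableAtFilter isOpen_Ioi
      (fun x hx => hContOn φ hc θ x hx) s hs
  have hLim : ∀ (φ : ℝ → ℝ), (∀ t, 0 ≤ t → |φ t| ≤ 1) → (∀ t, 0 < t → ContinuousAt φ t) →
      ∀ θ : ℝ, 0 < θ →
      Tendsto (fun u => ∫ t in (0:ℝ)..u, t ^ (θ - 1) * (Real.exp (-(t * a)) * φ t))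
        (𝓝[>] 0) (𝓝 0) := by
    intro φ hb hc θ hθ
    have hbound : ∀ᶠ u in 𝓝[>] (0:ℝ),
        ‖∫ t in (0:ℝ)..u, t ^ (θ - 1) * (Real.exp (-(t * a)) * φ t)‖ ≤ u ^ θ / θ := by
      filter_upwards [self_mem_nhdsWithin] with u (hu : 0 < u)
      have hval : (∫ t in (0:ℝ)..u, t ^ (θ - 1)) = u ^ θ / θ := by
        rw [integral_rpow (Or.inl (by linarith : (-1:ℝ) < θ - 1))]
        rw [Real.zero_rpow (by intro h; nlinarith [h] : θ - 1 + 1 ≠ 0)]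
        norm_num
      have hb2 : ∀ᵐ t ∂volume.restrict (Set.uIoc (0:ℝ) u),
          ‖t ^ (θ - 1) * (Real.exp (-(t * a)) * φ t)‖ ≤ t ^ (θ - 1) := by
        rw [uIoc_of_le hu.le]
        filter_upwards [ae_restrict_mem measurableSet_Ioc] with t ht
        exact habs φ hb θ hθ t ht.1
      have := intervalIntegral.norm_integral_le_abs_of_norm_le hb2
        (intervalIntegrable_rpow' (by linarith : (-1:ℝ) < θ - 1))
      rw [hval] at this
      calc ‖∫ t in (0:ℝ)..u, t ^ (θ - 1) * (Real.exp (-(t * a)) * φ t)‖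
          ≤ |u ^ θ / θ| := this
        _ = u ^ θ / θ := abs_of_nonneg (by positivity)
    have htend : Tendsto (fun u : ℝ => u ^ θ / θ) (𝓝[>] 0) (𝓝 0) := by
      have h1 : ContinuousAt (fun u : ℝ => u ^ θ / θ) 0 := by
        exact (Real.continuousAt_rpow_const 0 θ (Or.inr hθ.le)).div_const θ
      have h2 : Tendsto (fun u : ℝ => u ^ θ / θ) (𝓝 0) (𝓝 ((0:ℝ) ^ θ / θ)) := h1
      simpa [Real.zero_rpow hθ.ne'] using h2.mono_left nhdsWithin_le_nhds
    exact squeeze_zero_norm' hbound htend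
  -- set up the functions
  set f₁ : ℝ → ℝ := fun t => t ^ (θ₁ - 1) * (Real.exp (-(t * a)) * φ₁ t) with hf₁
  set f₂ : ℝ → ℝ := fun t => t ^ (θ₂ - 1) * (Real.exp (-(t * a)) * φ₂ t) with hf₂
  set fB : ℝ → ℝ := fun t => t ^ (θ₁ + θ₂ - 1) * (Real.exp (-(t * a)) * (φ₁ t * φ₂ t)) with hfB
  set G₁ : ℝ → ℝ := fun u => ∫ t in (0:ℝ)..u, f₁ t with hG₁
  set G₂ : ℝ → ℝ := fun u => ∫ t in (0:ℝ)..u, f₂ t with hG₂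
  set B : ℝ → ℝ := fun u => ∫ t in (0:ℝ)..u, fB t with hB
  have hbB : ∀ t, 0 ≤ t → |φ₁ t * φ₂ t| ≤ 1 := by
    intro t ht
    rw [abs_mul]
    have := hb₁ t ht; have := hb₂ t ht
    nlinarith [abs_nonneg (φ₁ t), abs_nonneg (φ₂ t)]
  have hcB : ∀ t, 0 < t → ContinuousAt (fun t => φ₁ t * φ₂ t) t :=
    fun t ht => (hc₁ t ht).mul (hc₂ t ht)
  have hΘ : 0 < θ₁ + θ₂ := by linarith
  set W : ℝ → ℝ := fun u => θ₁ * θ₂ * (G₁ u * G₂ u) - (θ₁ + θ₂) * B u with hW_def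
  have hWderiv : ∀ s, 0 < s → HasDerivAt W 0 s := by
    intro s hs
    have h1 := hFTC φ₁ hb₁ hc₁ θ₁ hθ₁ s hs
    have h2 := hFTC φ₂ hb₂ hc₂ θ₂ hθ₂ s hs
    have h3 := hFTC (fun t => φ₁ t * φ₂ t) hbB hcB (θ₁ + θ₂) hΘ s hs
    have hd : HasDerivAt W
        (θ₁ * θ₂ * (f₁ s * G₂ s + G₁ s * f₂ s) - (θ₁ + θ₂) * fB s) s :=
      ((h1.mul h2).const_mul (θ₁ * θ₂)).sub (h3.const_mul (θ₁ + θ₂))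
    have hzero : θ₁ * θ₂ * (f₁ s * G₂ s + G₁ s * f₂ s) - (θ₁ + θ₂) * fB s = 0 := by
      have r₁ : θ₁ * G₁ s = s ^ θ₁ * φ₁ s := (he₁ s hs).symm
      have r₂ : θ₂ * G₂ s = s ^ θ₂ * φ₂ s := (he₂ s hs).symm
      have e1 : s ^ (θ₁ - 1) * s ^ θ₂ = s ^ (θ₁ + θ₂ - 1) := by
        rw [← Real.rpow_add hs]; ring_nf
      have e2 : s ^ θ₁ * s ^ (θ₂ - 1) = s ^ (θ₁ + θ₂ - 1) := by
        rw [← Real.rpow_add hs]; ring_nf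
      have expand : θ₁ * θ₂ * (f₁ s * G₂ s + G₁ s * f₂ s)
          = θ₁ * (f₁ s * (θ₂ * G₂ s)) + θ₂ * ((θ₁ * G₁ s) * f₂ s) := by ring
      rw [expand, r₁, r₂, hf₁, hf₂, hfB]
      show θ₁ * (s ^ (θ₁ - 1) * (Real.exp (-(s * a)) * φ₁ s) * (s ^ θ₂ * φ₂ s))
          + θ₂ * (s ^ θ₁ * φ₁ s * (s ^ (θ₂ - 1) * (Real.exp (-(s * a)) * φ₂ s)))
          - (θ₁ + θ₂) * (s ^ (θ₁ + θ₂ - 1) * (Real.exp (-(s * a)) * (φ₁ s * φ₂ s))) = 0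
      linear_combination (θ₁ * (Real.exp (-(s * a)) * φ₁ s * φ₂ s)) * e1
        + (θ₂ * (Real.exp (-(s * a)) * φ₁ s * φ₂ s)) * e2
    rw [hzero] at hd
    exact hd
  have hWlim : Tendsto W (𝓝[>] 0) (𝓝 0) := by
    have l1 := hLim φ₁ hb₁ hc₁ θ₁ hθ₁
    have l2 := hLim φ₂ hb₂ hc₂ θ₂ hθ₂
    have l3 := hLim (fun t => φ₁ t * φ₂ t) hbB hcB (θ₁ + θ₂) hΘ
    have := ((l1.mul l2).const_mul (θ₁ * θ₂)).sub (l3.const_mul (θ₁ + θ₂))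
    simpa using this
  have hWconst : ∀ x ∈ Set.Ioi (0:ℝ), ∀ y ∈ Set.Ioi (0:ℝ), W x = W y := by
    intro x hx y hy
    have hdiff : DifferentiableOn ℝ W (Set.Ioi 0) :=
      fun z hz => ((hWderiv z hz).differentiableAt).differentiableWithinAt
    have hfd : ∀ z ∈ Set.Ioi (0:ℝ), fderivWithin ℝ W (Set.Ioi 0) z = 0 := by
      intro z hz
      have h0 := (hWderiv z hz).hasFDerivAt
      have := h0.hasFDerivWithinAt.fderivWithin (isOpen_Ioi.uniqueDiffWithinAt hz)
      rw [this]
      ext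
      simp
    exact (convex_Ioi (0:ℝ)).is_const_of_fderivWithin_eq_zero hdiff hfd hx hy
  have hWzero : ∀ s, 0 < s → W s = 0 := by
    intro s hs
    have hconst : Tendsto W (𝓝[>] (0:ℝ)) (𝓝 (W s)) := by
      refine Tendsto.congr' ?_ tendsto_const_nhds
      filter_upwards [self_mem_nhdsWithin] with x (hx : 0 < x)
      exact hWconst s hs x hx
    exact tendsto_nhds_unique hconst hWlim
  intro s hs
  have key := hWzero s hs
  have r₁ : θ₁ * G₁ s = s ^ θ₁ * φ₁ s := (he₁ s hs).symm
  have r₂ : θ₂ * G₂ s = s ^ θ₂ * φ₂ s := (he₂ s hs).symm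
  have e3 : s ^ θ₁ * s ^ θ₂ = s ^ (θ₁ + θ₂) := (Real.rpow_add hs θ₁ θ₂).symm
  have : s ^ (θ₁ + θ₂) * (φ₁ s * φ₂ s) = (θ₁ * G₁ s) * (θ₂ * G₂ s) := by
    rw [r₁, r₂, ← e3]; ring
  rw [hW_def] at key
  show s ^ (θ₁ + θ₂) * (φ₁ s * φ₂ s) = (θ₁ + θ₂) * B s
  simp only at key
  nlinarith [key, this]

section Phi
variable {Ω : Type*} [MeasurableSpace Ω] (P : Measure Ω) [IsProbabilityMeasure P]
  {D : Ω → ℝ}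

lemma phi_int (hD : Measurable D) (hDnn : ∀ ω, 0 ≤ D ω) {s : ℝ} (hs : 0 ≤ s) :
    Integrable (fun ω => Real.exp (-(s * D ω))) P := by
  refine Integrable.mono' (integrable_const 1)
    ((measurable_const.mul hD).neg.exp).aestronglyMeasurable ?_
  refine Eventually.of_forall fun ω => ?_
  rw [Real.norm_eq_abs, abs_of_pos (Real.exp_pos _)]
  exact Real.exp_le_one_iff.mpr (by nlinarith [hDnn ω])

lemma phi_bound (hDnn : ∀ ω, 0 ≤ D ω) : ∀ s, 0 ≤ s → |∫ ω, Real.exp (-(s * D ω)) ∂P| ≤ 1 := by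
  intro s hs
  rw [← Real.norm_eq_abs]
  calc ‖∫ ω, Real.exp (-(s * D ω)) ∂P‖ ≤ 1 * (P Set.univ).toReal := by
        refine MeasureTheory.norm_integral_le_of_norm_le_const (Eventually.of_forall fun ω => ?_)
        rw [Real.norm_eq_abs, abs_of_pos (Real.exp_pos _)]
        exact Real.exp_le_one_iff.mpr (by nlinarith [hDnn ω])
    _ = 1 := by simp

lemma phi_cont (hD : Measurable D) (hDnn : ∀ ω, 0 ≤ D ω) : ∀ s : ℝ, 0 < s → ContinuousAt (fun s => ∫ ω, Real.exp (-(s * D ω)) ∂P) s := by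
  intro s₀ hs₀
  refine continuousAt_of_dominated (bound := fun _ => (1:ℝ))
    (Eventually.of_forall fun s =>
      ((measurable_const.mul hD).neg.exp).aestronglyMeasurable) ?_ (integrable_const 1) ?_
  · filter_upwards [eventually_gt_nhds hs₀] with s (hs : 0 < s)
    refine Eventually.of_forall fun ω => ?_
    rw [Real.norm_eq_abs, abs_of_pos (Real.exp_pos _)]
    exact Real.exp_le_one_iff.mpr (by nlinarith [hDnn ω])
  · refine Eventually.of_forall fun ω => ?_
    exact (Real.continuous_exp.comp ((continuous_id.mul continuous_const).neg)).continuousAt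

end Phi

end DickmanProof

open DickmanProof in
/-- If `D₁`, `D₂` are independent nonnegative random variables satisfying the Dickman
fixed-point equations with parameters `(θ₁, a)` and `(θ₂, a)` respectively, then `D₁ + D₂`
satisfies the Dickman fixed-point equation with parameters `(θ₁ + θ₂, a)`. -/
theorem statement5 {Ω : Type*} [MeasurableSpace Ω] (P : Measure Ω) [IsProbabilityMeasure P]
    (θ₁ θ₂ a : ℝ) (hθ₁ : 0 < θ₁) (hθ₂ : 0 < θ₂) (ha : 0 < a)
    (D₁ D₂ : Ω → ℝ) (hD₁ : Measurable D₁) (hD₂ : Measurable D₂)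
    (hD₁nn : ∀ ω, 0 ≤ D₁ ω) (hD₂nn : ∀ ω, 0 ≤ D₂ ω)
    (hindep : IndepFun D₁ D₂ P)
    (h₁ : DickmanFP P θ₁ a D₁) (h₂ : DickmanFP P θ₂ a D₂) :
    DickmanFP P (θ₁ + θ₂) a (fun ω => D₁ ω + D₂ ω) := by
  set Θ := θ₁ + θ₂ with hΘ_def
  have hΘ : 0 < Θ := by linarith
  set S : Ω → ℝ := fun ω => D₁ ω + D₂ ω with hS_def
  have hS : Measurable S := hD₁.add hD₂
  have hSnn : ∀ ω, 0 ≤ S ω := fun ω => by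
    have := hD₁nn ω; have := hD₂nn ω; simp only [hS_def]; linarith
  set φ₁ : ℝ → ℝ := fun s => ∫ ω, Real.exp (-(s * D₁ ω)) ∂P with hφ₁_def
  set φ₂ : ℝ → ℝ := fun s => ∫ ω, Real.exp (-(s * D₂ ω)) ∂P with hφ₂_def
  -- laplace transform of the sum factorizes
  have hprod : ∀ s : ℝ, 0 ≤ s →
      ∫ ω, Real.exp (-(s * S ω)) ∂P = φ₁ s * φ₂ s := by
    intro s hs
    have hf : Measurable fun x : ℝ => Real.exp (-(s * x)) :=
      (measurable_const.mul measurable_id).neg.exp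
    have hcomp : IndepFun (fun ω => Real.exp (-(s * D₁ ω)))
        (fun ω => Real.exp (-(s * D₂ ω))) P := hindep.comp hf hf
    have heq : ∀ ω, Real.exp (-(s * S ω))
        = Real.exp (-(s * D₁ ω)) * Real.exp (-(s * D₂ ω)) := by
      intro ω
      rw [← Real.exp_add]
      congr 1
      simp only [hS_def]
      ring
    calc ∫ ω, Real.exp (-(s * S ω)) ∂P
        = ∫ ω, Real.exp (-(s * D₁ ω)) * Real.exp (-(s * D₂ ω)) ∂P := by
          exact integral_congr_ae (Eventually.of_forall heq)
      _ = φ₁ s * φ₂ s := hcomp.integral_fun_mul_eq_mul_integral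
          (phi_int P hD₁ hD₁nn hs).1 (phi_int P hD₂ hD₂nn hs).1
  -- the functional equation for each factor
  have hfe : ∀ (θ : ℝ), 0 < θ → ∀ (D : Ω → ℝ), Measurable D → (∀ ω, 0 ≤ D ω) →
      DickmanFP P θ a D → ∀ s : ℝ, 0 < s →
      s ^ θ * (∫ ω, Real.exp (-(s * D ω)) ∂P)
        = θ * ∫ t in (0:ℝ)..s, t ^ (θ - 1) *
            (Real.exp (-(t * a)) * ∫ ω, Real.exp (-(t * D ω)) ∂P) := by
    intro θ hθ D hD hDnn hFP s hs
    have hmap : ∫ x, Real.exp (-(s * x)) ∂(P.map D) = ∫ ω, Real.exp (-(s * D ω)) ∂P := by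
      rw [integral_map hD.aemeasurable
        (Continuous.aestronglyMeasurable (by continuity : Continuous fun x : ℝ => Real.exp (-(s*x))))]
    have hI := laplace_map P hθ ha hD hDnn hs
    rw [← hFP, hmap] at hI
    have hioc : (∫ t in Set.Ioc (0:ℝ) s, t ^ (θ - 1) *
          (Real.exp (-(t * a)) * ∫ ω, Real.exp (-(t * D ω)) ∂P))
        = ∫ t in (0:ℝ)..s, t ^ (θ - 1) *
          (Real.exp (-(t * a)) * ∫ ω, Real.exp (-(t * D ω)) ∂P) :=
      (intervalIntegral.integral_of_le hs.le).symm
    rw [hioc] at hI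
    have hpow : s ^ θ * s ^ (-θ) = 1 := by
      rw [← Real.rpow_add hs]; simp
    rw [hI]
    linear_combination (θ * ∫ t in (0:ℝ)..s, t ^ (θ - 1) *
      (Real.exp (-(t * a)) * ∫ ω, Real.exp (-(t * D ω)) ∂P)) * hpow
  -- apply the core ODE argument
  have hkey := core hθ₁ hθ₂ ha φ₁ φ₂
    (phi_bound P hD₁nn) (phi_bound P hD₂nn)
    (phi_cont P hD₁ hD₁nn) (phi_cont P hD₂ hD₂nn)
    (hfe θ₁ hθ₁ D₁ hD₁ hD₁nn h₁) (hfe θ₂ hθ₂ D₂ hD₂ hD₂nn h₂)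
  -- now prove the measure identity via Laplace transforms
  set F : Ω × ℝ → ℝ := fun p => p.2 ^ (1/Θ) * (a + S p.1) with hF_def
  have hF : Measurable F :=
    (measurable_snd.pow_const _).mul (measurable_const.add (hS.comp measurable_fst))
  show P.map S = (P.prod (unifIoc 0 1)).map F
  have hmapS : IsProbabilityMeasure (P.map S) := Measure.isProbabilityMeasure_map hS.aemeasurable
  have hmapF : IsProbabilityMeasure ((P.prod (unifIoc 0 1)).map F) :=
    Measure.isProbabilityMeasure_map hF.aemeasurable
  refine ext_of_laplace _ _ ?_ ?_ ?_
  · rw [Measure.map_apply hS (by exact measurableSet_Iio : MeasurableSet {x : ℝ | x < 0})]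
    have hpre : S ⁻¹' {x : ℝ | x < 0} = ∅ := by
      ext ω
      simp only [Set.mem_preimage, Set.mem_setOf_eq, Set.mem_empty_iff_false, iff_false, not_lt]
      exact hSnn ω
    rw [hpre, measure_empty]
  · rw [Measure.map_apply hF (by exact measurableSet_Iio : MeasurableSet {x : ℝ | x < 0})]
    have hnull : (P.prod (unifIoc 0 1)) (Set.univ ×ˢ (Set.Ioc (0:ℝ) 1)ᶜ) = 0 := by
      rw [Measure.prod_prod, unifIoc_eq, Measure.restrict_apply measurableSet_Ioc.compl]
      simp
    refine measure_mono_null (fun p hp => ?_) hnull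
    simp only [Set.mem_preimage, Set.mem_setOf_eq] at hp
    simp only [Set.mem_prod, Set.mem_univ, true_and, Set.mem_compl_iff]
    intro hmem
    have h1 : (0:ℝ) ≤ p.2 ^ (1/Θ) := Real.rpow_nonneg hmem.1.le _
    have h2 : (0:ℝ) ≤ a + S p.1 := by linarith [hSnn p.1, ha.le]
    have h3 : (0:ℝ) ≤ F p := mul_nonneg h1 h2
    exact absurd hp (not_lt.mpr h3)
  · intro n
    rcases Nat.eq_zero_or_pos n with hn | hn
    · subst hn
      simp
    · have hs : (0:ℝ) < n := by exact_mod_cast hn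
      have hmapL : ∫ x, Real.exp (-((n:ℝ) * x)) ∂(P.map S)
          = ∫ ω, Real.exp (-((n:ℝ) * S ω)) ∂P := by
        rw [integral_map hS.aemeasurable (Continuous.aestronglyMeasurable
          (by continuity : Continuous fun x : ℝ => Real.exp (-((n:ℝ)*x))))]
      rw [hmapL, hprod _ hs.le]
      have hR := laplace_map P hΘ ha hS hSnn hs
      rw [hR]
      have hcong : (∫ t in Set.Ioc (0:ℝ) (n:ℝ), t ^ (Θ - 1) *
            (Real.exp (-(t * a)) * ∫ ω, Real.exp (-(t * S ω)) ∂P))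
          = ∫ t in Set.Ioc (0:ℝ) (n:ℝ), t ^ (Θ - 1) *
            (Real.exp (-(t * a)) * (φ₁ t * φ₂ t)) := by
        refine setIntegral_congr_fun measurableSet_Ioc fun t ht => ?_
        rw [hprod t ht.1.le]
      rw [hcong]
      have hioc : (∫ t in Set.Ioc (0:ℝ) (n:ℝ), t ^ (Θ - 1) *
            (Real.exp (-(t * a)) * (φ₁ t * φ₂ t)))
          = ∫ t in (0:ℝ)..(n:ℝ), t ^ (Θ - 1) *
            (Real.exp (-(t * a)) * (φ₁ t * φ₂ t)) :=
        (intervalIntegral.integral_of_le hs.le).symm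
      rw [hioc]
      have hk := hkey (n:ℝ) hs
      have hpow : (n:ℝ) ^ (-Θ) * (n:ℝ) ^ Θ = 1 := by
        rw [← Real.rpow_add hs]; simp
      calc φ₁ (n:ℝ) * φ₂ (n:ℝ)
          = ((n:ℝ) ^ (-Θ) * (n:ℝ) ^ Θ) * (φ₁ (n:ℝ) * φ₂ (n:ℝ)) := by rw [hpow]; ring
        _ = (n:ℝ) ^ (-Θ) * ((n:ℝ) ^ Θ * (φ₁ (n:ℝ) * φ₂ (n:ℝ))) := by ring
        _ = (n:ℝ) ^ (-Θ) * (Θ * ∫ t in (0:ℝ)..(n:ℝ), t ^ (Θ - 1) *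
              (Real.exp (-(t * a)) * (φ₁ t * φ₂ t))) := by rw [hk]
        _ = Θ * (n:ℝ) ^ (-Θ) * ∫ t in (0:ℝ)..(n:ℝ), t ^ (Θ - 1) *
              (Real.exp (-(t * a)) * (φ₁ t * φ₂ t)) := by ring
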